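/- Let p be prime and n ≥ 1 with l = max{t : p^t ≤ s_p(n)}. Then the p-adic valuation of D_n = lcm{ k · j_1!···j_k! : j_i ≥ 1, j_1+...+j_k = n, 1 ≤ k ≤ n } equals v_p(n!) + l. -/

import Mathlib

/-- base-p digit sum -/
def sp (p n : ℕ) : ℕ := (Nat.digits p n).sum

/-- `D n` : the lcm of `k * j₁! ⋯ jₖ!` over all compositions of `n` into `k ≥ 1` positive parts. -/
def Dn (n : ℕ) : ℕ :=
  (Finset.Icc 1 n).lcm fun k =>
    (((Finset.Nat.antidiagonalTuple k n).filter fun j => ∀ i, 1 ≤ j i).lcm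
      fun j => k * ∏ i, Nat.factorial (j i))

section Aux

variable {p : ℕ}

lemma sp_zero : sp p 0 = 0 := by simp [sp]

lemma sp_def (hp : 2 ≤ p) {n : ℕ} (hn : n ≠ 0) : sp p n = n % p + sp p (n / p) := by
  unfold sp
  rw [Nat.digits_def' hp (Nat.pos_of_ne_zero hn), List.sum_cons]

lemma sp_le (hp : 2 ≤ p) : ∀ n, sp p n ≤ n := by
  intro n
  induction n using Nat.strong_induction_on with
  | _ n ih =>
    rcases eq_or_ne n 0 with rfl | hn
    · simp [sp_zero]
    · rw [sp_def hp hn]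
      have h1 : n / p < n := Nat.div_lt_self (Nat.pos_of_ne_zero hn) (by omega)
      have h2 := ih _ h1
      have h3 := Nat.mod_add_div n p
      have h4 : n / p ≤ p * (n / p) := Nat.le_mul_of_pos_left _ (by omega)
      omega

lemma sp_pos (hp : 2 ≤ p) : ∀ {n : ℕ}, n ≠ 0 → 1 ≤ sp p n := by
  intro n
  induction n using Nat.strong_induction_on with
  | _ n ih =>
    intro hn
    rw [sp_def hp hn]
    rcases Nat.eq_zero_or_pos (n % p) with h | h
    · have h3 := Nat.mod_add_div n p
      have hnp : n / p ≠ 0 := by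
        intro h0; rw [h0] at h3; omega
      have h1 : n / p < n := Nat.div_lt_self (Nat.pos_of_ne_zero hn) (by omega)
      have := ih _ h1 hnp
      omega
    · omega

lemma sp_modeq (hp : 2 ≤ p) (n : ℕ) : n ≡ sp p n [MOD p - 1] := by
  rcases eq_or_lt_of_le hp with h | h
  · have : p - 1 = 1 := by omega
    rw [this]
    exact Nat.modEq_one
  · refine Nat.modEq_digits_sum (p - 1) p ?_ n
    have h1 : p % (p - 1) = (p - (p - 1)) % (p - 1) := Nat.mod_eq_sub_mod (by omega)
    have h2 : p - (p - 1) = 1 := by omega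
    rw [h1, h2]
    exact Nat.mod_eq_of_lt (by omega)

lemma legendre [Fact p.Prime] (n : ℕ) :
    (p - 1) * padicValNat p n.factorial = n - sp p n :=
  sub_one_mul_padicValNat_factorial n

lemma padicValNat_le_of_dvd [Fact p.Prime] {a b : ℕ} (h : a ∣ b) (hb : b ≠ 0) :
    padicValNat p a ≤ padicValNat p b :=
  (padicValNat_dvd_iff_le hb).mp (dvd_trans pow_padicValNat_dvd h)

lemma sp_add_le (hpp : p.Prime) (a b : ℕ) : sp p (a + b) ≤ sp p a + sp p b := by
  haveI : Fact p.Prime := ⟨hpp⟩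
  have hp : 2 ≤ p := hpp.two_le
  have hd : a.factorial * b.factorial ∣ (a + b).factorial :=
    Nat.factorial_mul_factorial_dvd_factorial_add a b
  have h1 : padicValNat p a.factorial + padicValNat p b.factorial
      ≤ padicValNat p (a + b).factorial := by
    rw [← padicValNat.mul a.factorial_ne_zero b.factorial_ne_zero]
    exact padicValNat_le_of_dvd hd (a + b).factorial_ne_zero
  have h2 := legendre (p := p) a
  have h3 := legendre (p := p) b
  have h4 := legendre (p := p) (a + b)
  have h5 : (p - 1) * (padicValNat p a.factorial + padicValNat p b.factorial)
      ≤ (p - 1) * padicValNat p (a + b).factorial := Nat.mul_le_mul_left _ h1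
  rw [mul_add, h2, h3, h4] at h5
  have l1 := sp_le hp a
  have l2 := sp_le hp b
  have l3 := sp_le hp (a + b)
  omega

lemma sp_sum_le (hpp : p.Prime) {α : Type*} (s : Finset α) (f : α → ℕ) :
    sp p (∑ i ∈ s, f i) ≤ ∑ i ∈ s, sp p (f i) := by
  classical
  induction s using Finset.induction_on with
  | empty => simp [sp_zero]
  | @insert a s h ih =>
    rw [Finset.sum_insert h, Finset.sum_insert h]
    exact le_trans (sp_add_le hpp _ _) (by omega)

lemma finset_lcm_ne_zero {α : Type*} (s : Finset α) (f : α → ℕ)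
    (h : ∀ i ∈ s, f i ≠ 0) : s.lcm f ≠ 0 := by
  classical
  induction s using Finset.induction_on with
  | empty => simp
  | @insert a s ha ih =>
    rw [Finset.lcm_insert, lcm_eq_nat_lcm]
    have h1 : f a ≠ 0 := h a (Finset.mem_insert_self a s)
    have h2 : s.lcm f ≠ 0 := ih fun i hi => h i (Finset.mem_insert_of_mem hi)
    simp [Nat.lcm_ne_zero h1 h2]

lemma padicValNat_nat_lcm [Fact p.Prime] {a b : ℕ} (ha : a ≠ 0) (hb : b ≠ 0) :
    padicValNat p (Nat.lcm a b) = max (padicValNat p a) (padicValNat p b) := by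
  have h := Nat.factorization_lcm ha hb
  have h2 := congrFun (congrArg (fun f => f.toFun) h) p
  have := congrArg (fun f => f p) h
  simp only [Finsupp.sup_apply] at this
  rwa [Nat.factorization_def _ Fact.out, Nat.factorization_def _ Fact.out,
    Nat.factorization_def _ Fact.out] at this

lemma padicValNat_finset_lcm [Fact p.Prime] {α : Type*} (s : Finset α) (f : α → ℕ)
    (h : ∀ i ∈ s, f i ≠ 0) :
    padicValNat p (s.lcm f) = s.sup fun i => padicValNat p (f i) := by
  classical
  induction s using Finset.induction_on with
  | empty => simp
  | @insert a s ha ih =>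
    rw [Finset.lcm_insert, lcm_eq_nat_lcm, Finset.sup_insert]
    have h1 : f a ≠ 0 := h a (Finset.mem_insert_self a s)
    have h2 : s.lcm f ≠ 0 := finset_lcm_ne_zero s f fun i hi => h i (Finset.mem_insert_of_mem hi)
    rw [padicValNat_nat_lcm h1 h2, ih fun i hi => h i (Finset.mem_insert_of_mem hi)]

lemma padicValNat_finset_prod [Fact p.Prime] {α : Type*} (s : Finset α) (f : α → ℕ)
    (h : ∀ i ∈ s, f i ≠ 0) :
    padicValNat p (∏ i ∈ s, f i) = ∑ i ∈ s, padicValNat p (f i) := by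
  classical
  induction s using Finset.induction_on with
  | empty => simp
  | @insert a s ha ih =>
    rw [Finset.prod_insert ha, Finset.sum_insert ha,
      padicValNat.mul (h a (Finset.mem_insert_self a s))
        (Finset.prod_ne_zero_iff.mpr fun i hi => h i (Finset.mem_insert_of_mem hi)),
      ih fun i hi => h i (Finset.mem_insert_of_mem hi)]

lemma pow_ineq (hp : 2 ≤ p) {l : ℕ} : ∀ m, l + 1 ≤ m →
    (p - 1) * (m - (l + 1)) + p ^ (l + 1) ≤ p ^ m := by
  obtain ⟨q, rfl⟩ : ∃ q, p = q + 2 := ⟨p - 2, by omega⟩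
  have e : q + 2 - 1 = q + 1 := by omega
  intro m
  induction m with
  | zero => omega
  | succ m ih =>
    intro hm
    rcases eq_or_lt_of_le hm with h | h
    · rw [← h]
      simp
    · have h1 := ih (by omega)
      have h2 : 1 ≤ (q + 2) ^ m := Nat.one_le_pow _ _ (by omega)
      have h4 : m + 1 - (l + 1) = (m - (l + 1)) + 1 := by omega
      rw [e] at h1 ⊢
      rw [pow_succ, h4, Nat.mul_add, Nat.mul_one]
      have h5 : (q + 1) * 1 ≤ (q + 1) * (q + 2) ^ m := Nat.mul_le_mul_left _ h2
      calc (q + 1) * (m - (l + 1)) + (q + 1) + (q + 2) ^ (l + 1)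
          ≤ (q + 2) ^ m + (q + 1) := by linarith
        _ ≤ (q + 2) ^ m + (q + 1) * (q + 2) ^ m := by linarith
        _ = (q + 2) ^ m * (q + 2) := by ring

lemma split_unit (hp : 2 ≤ p) : ∀ n, 2 ≤ sp p n →
    ∃ a b, n = a + b ∧ 1 ≤ a ∧ 1 ≤ b ∧ sp p a = 1 ∧ sp p b + 1 = sp p n := by
  intro n
  induction n using Nat.strong_induction_on with
  | _ n ih =>
    intro hs
    have hn : n ≠ 0 := by
      intro h; rw [h, sp_zero] at hs; omega
    have hdm := Nat.div_add_mod n p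
    rcases Nat.eq_zero_or_pos (n % p) with hr | hr
    · -- n divisible by p
      have hnp : n / p ≠ 0 := by
        intro h0
        have h1 : n < p := (Nat.div_eq_zero_iff.mp h0).resolve_left (by omega)
        rw [Nat.mod_eq_of_lt h1] at hr
        exact hn hr
      have hlt : n / p < n := Nat.div_lt_self (Nat.pos_of_ne_zero hn) (by omega)
      have hsq : sp p (n / p) = sp p n := by rw [sp_def hp hn, hr, Nat.zero_add]
      obtain ⟨a, b, hab, ha1, hb1, hsa, hsb⟩ := ih _ hlt (by omega)
      refine ⟨p * a, p * b, ?_, ?_, ?_, ?_, ?_⟩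
      · have : n = p * (n / p) := by omega
        rw [this, hab]; ring
      · exact Nat.mul_pos (by omega) ha1
      · exact Nat.mul_pos (by omega) hb1
      · have hpa : p * a ≠ 0 := Nat.mul_ne_zero (by omega) (by omega)
        rw [sp_def hp hpa, Nat.mul_mod_right, Nat.mul_div_cancel_left _ (by omega : 0 < p)]
        omega
      · have hpb : p * b ≠ 0 := Nat.mul_ne_zero (by omega) (by omega)
        rw [sp_def hp hpb, Nat.mul_mod_right, Nat.mul_div_cancel_left _ (by omega : 0 < p)]
        omega
    · -- last digit nonzero : split off 1
      have hn2 : 2 ≤ n := le_trans hs (sp_le hp n)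
      have hmp : n % p < p := Nat.mod_lt _ (by omega)
      refine ⟨1, n - 1, by omega, le_refl 1, by omega, ?_, ?_⟩
      · rw [sp_def hp one_ne_zero, Nat.mod_eq_of_lt (by omega), Nat.div_eq_of_lt (by omega),
          sp_zero]
      · have hb : n - 1 = p * (n / p) + (n % p - 1) := by omega
        have hmod : (n - 1) % p = n % p - 1 := by
          rw [hb, Nat.mul_add_mod, Nat.mod_eq_of_lt (by omega : n % p - 1 < p)]
        have hdiv : (n - 1) / p = n / p := by
          rw [hb, Nat.mul_add_div (by omega : 0 < p),
            Nat.div_eq_of_lt (by omega : n % p - 1 < p), Nat.add_zero]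
        rw [sp_def hp (by omega : n - 1 ≠ 0), hmod, hdiv, sp_def hp hn]
        omega

lemma exists_comp (hp : 2 ≤ p) : ∀ k, 1 ≤ k → ∀ n, k ≤ sp p n →
    ∃ j : Fin k → ℕ, (∀ i, 1 ≤ j i) ∧ ∑ i, j i = n ∧ ∑ i, sp p (j i) ≤ sp p n := by
  intro k
  induction k with
  | zero => omega
  | succ k ih =>
    intro _ n hk
    rcases Nat.eq_zero_or_pos k with rfl | hk1
    · -- one part
      have hn : n ≠ 0 := by
        intro h; rw [h, sp_zero] at hk; omega
      exact ⟨fun _ => n, fun _ => Nat.pos_of_ne_zero hn, by simp, by simp⟩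
    · obtain ⟨a, b, hab, ha1, hb1, hsa, hsb⟩ := split_unit hp n (by omega)
      obtain ⟨j', hj1, hj2, hj3⟩ := ih hk1 b (by omega)
      refine ⟨Fin.cons a j', ?_, ?_, ?_⟩
      · intro i
        refine Fin.cases ?_ ?_ i
        · simpa using ha1
        · intro i'; simpa using hj1 i'
      · rw [Fin.sum_univ_succ]
        simp only [Fin.cons_zero, Fin.cons_succ]
        rw [hj2]; omega
      · rw [Fin.sum_univ_succ]
        simp only [Fin.cons_zero, Fin.cons_succ]
        rw [hsa]
        omega

lemma modeq_sum {α : Type*} (s : Finset α) (f g : α → ℕ) (d : ℕ)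
    (h : ∀ i ∈ s, f i ≡ g i [MOD d]) : (∑ i ∈ s, f i) ≡ (∑ i ∈ s, g i) [MOD d] := by
  classical
  induction s using Finset.induction_on with
  | empty => rw [Finset.sum_empty, Finset.sum_empty]
  | @insert a s ha ih =>
    rw [Finset.sum_insert ha, Finset.sum_insert ha]
    exact Nat.ModEq.add (h a (Finset.mem_insert_self a s))
      (ih fun i hi => h i (Finset.mem_insert_of_mem hi))

lemma arith_combine {A B C D S s n : ℕ} (e1 : B + S = n) (e2 : C + s = n) (hs : s ≤ S)
    (key : A ≤ D + (S - s)) : A + B ≤ C + D := by omega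

end Aux

theorem padicValNat_Dn (p : ℕ) (hp : p.Prime) (n : ℕ) (hn : 1 ≤ n)
    (l : ℕ) (hl : l = Nat.log p (sp p n)) :
    padicValNat p (Dn n) = padicValNat p n.factorial + l := by
  haveI : Fact p.Prime := ⟨hp⟩
  have hp2 : 2 ≤ p := hp.two_le
  have hq : 1 ≤ p - 1 := by omega
  have hsn : 1 ≤ sp p n := sp_pos hp2 (by omega)
  have hsle : sp p n ≤ n := sp_le hp2 n
  -- valuations of the terms
  have hterm : ∀ k : ℕ, 1 ≤ k → ∀ j : Fin k → ℕ,
      padicValNat p (k * ∏ i, Nat.factorial (j i)) =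
        padicValNat p k + ∑ i, padicValNat p (Nat.factorial (j i)) := by
    intro k hk j
    rw [padicValNat.mul (by omega)
        (Finset.prod_ne_zero_iff.mpr fun i _ => (j i).factorial_ne_zero),
      padicValNat_finset_prod _ _ fun i _ => (j i).factorial_ne_zero]
  -- rewrite the valuation of the lcm as a sup of sups
  have hmain : padicValNat p (Dn n) =
      (Finset.Icc 1 n).sup fun k =>
        (((Finset.Nat.antidiagonalTuple k n).filter fun j => ∀ i, 1 ≤ j i).sup
          fun j => padicValNat p (k * ∏ i, Nat.factorial (j i))) := by
    unfold Dn
    rw [padicValNat_finset_lcm]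
    · apply Finset.sup_congr rfl
      intro k hk
      rw [padicValNat_finset_lcm]
      intro j hj
      have hk1 : 1 ≤ k := (Finset.mem_Icc.mp hk).1
      positivity
    · intro k hk
      have hk1 : 1 ≤ k := (Finset.mem_Icc.mp hk).1
      apply finset_lcm_ne_zero
      intro j hj
      positivity
  rw [hmain]
  clear hmain
  apply le_antisymm
  · -- upper bound
    apply Finset.sup_le
    intro k hk
    apply Finset.sup_le
    intro j hj
    obtain ⟨hk1, hk2⟩ := Finset.mem_Icc.mp hk
    rw [Finset.mem_filter, Finset.Nat.mem_antidiagonalTuple] at hj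
    obtain ⟨hsum, hpos⟩ := hj
    rw [hterm k hk1 j]
    set S := ∑ i, sp p (j i) with hS
    set V := ∑ i, padicValNat p (Nat.factorial (j i)) with hV
    set m := padicValNat p k with hm
    -- key equalities
    have e1 : (p - 1) * V + S = n := by
      rw [hV, hS, Finset.mul_sum, ← Finset.sum_add_distrib]
      rw [← hsum]
      apply Finset.sum_congr rfl
      intro i _
      rw [legendre]
      have := sp_le hp2 (j i)
      omega
    have e2 : (p - 1) * padicValNat p n.factorial + sp p n = n := by
      rw [legendre]; omega
    have hsS : sp p n ≤ S := by
      rw [hS, ← hsum]; exact sp_sum_le hp _ _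
    have hkS : k ≤ S := by
      calc k = ∑ _i : Fin k, 1 := by simp
        _ ≤ S := Finset.sum_le_sum fun i _ => sp_pos hp2 (by have := hpos i; omega)
    have hSn : S ≤ n := by omega
    -- divisibility of S - s by p - 1
    have hdvd : (p - 1) ∣ (S - sp p n) := by
      have hSmod : n ≡ S [MOD p - 1] := by
        rw [hS, ← hsum]
        exact modeq_sum Finset.univ j (fun i => sp p (j i)) (p - 1)
          fun i _ => sp_modeq hp2 (j i)
      have hsmod : sp p n ≡ S [MOD p - 1] := (sp_modeq hp2 n).symm.trans hSmod
      exact (Nat.modEq_iff_dvd' hsS).mp hsmod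
    -- the key inequality
    have key : (p - 1) * m ≤ (p - 1) * l + (S - sp p n) := by
      rcases le_or_gt m l with h | h
      · calc (p - 1) * m ≤ (p - 1) * l := Nat.mul_le_mul_left _ h
          _ ≤ _ := Nat.le_add_right _ _
      · -- m ≥ l + 1
        have hpmk : p ^ m ≤ k := Nat.le_of_dvd (by omega) pow_padicValNat_dvd
        have hpmS : p ^ m ≤ S := le_trans hpmk hkS
        have hslt : sp p n < p ^ (l + 1) := by
          rw [hl]; exact Nat.lt_pow_succ_log_self (by omega) _
        have hpow := pow_ineq hp2 (l := l) m (by omega)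
        obtain ⟨t, ht⟩ := hdvd
        have h1 : (p - 1) * (m - (l + 1)) + 1 ≤ S - sp p n := by omega
        have h2 : (p - 1) * (m - (l + 1)) < (p - 1) * t := by omega
        have h3 : m - (l + 1) < t := Nat.lt_of_mul_lt_mul_left h2
        have h4 : m - l ≤ t := by omega
        calc (p - 1) * m = (p - 1) * l + (p - 1) * (m - l) := by
              rw [← Nat.mul_add]; congr 1; omega
          _ ≤ (p - 1) * l + (p - 1) * t := by
              have := Nat.mul_le_mul_left (p - 1) h4; omega
          _ = (p - 1) * l + (S - sp p n) := by rw [ht]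
    -- combine
    have hfinal : (p - 1) * m + (p - 1) * V ≤
        (p - 1) * padicValNat p n.factorial + (p - 1) * l :=
      arith_combine e1 e2 hsS key
    have : (p - 1) * (m + V) ≤ (p - 1) * (padicValNat p n.factorial + l) := by
      rw [Nat.mul_add, Nat.mul_add]; exact hfinal
    exact Nat.le_of_mul_le_mul_left this (by omega)
  · -- lower bound : exhibit k = p ^ l and a suitable composition
    have hpl : p ^ l ≤ sp p n := by
      rw [hl]; exact Nat.pow_log_le_self p (by omega)
    have hk1 : 1 ≤ p ^ l := Nat.one_le_pow _ _ (by omega)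
    obtain ⟨j, hj1, hj2, hj3⟩ := exists_comp hp2 (p ^ l) hk1 n hpl
    have hSeq : ∑ i, sp p (j i) = sp p n := by
      have := sp_sum_le hp (Finset.univ : Finset (Fin (p ^ l))) j
      rw [hj2] at this
      omega
    have hmem1 : p ^ l ∈ Finset.Icc 1 n := Finset.mem_Icc.mpr ⟨hk1, le_trans hpl hsle⟩
    have hmem2 : j ∈ (Finset.Nat.antidiagonalTuple (p ^ l) n).filter fun j => ∀ i, 1 ≤ j i :=
      Finset.mem_filter.mpr ⟨Finset.Nat.mem_antidiagonalTuple.mpr hj2, hj1⟩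
    have hval : padicValNat p (p ^ l * ∏ i, Nat.factorial (j i)) =
        padicValNat p n.factorial + l := by
      rw [hterm _ hk1 j, padicValNat.prime_pow]
      have e1 : (p - 1) * (∑ i, padicValNat p (Nat.factorial (j i))) + sp p n = n := by
        rw [Finset.mul_sum, ← hSeq, ← Finset.sum_add_distrib, ← hj2]
        apply Finset.sum_congr rfl
        intro i _
        rw [legendre]
        have := sp_le hp2 (j i)
        omega
      have e2 : (p - 1) * padicValNat p n.factorial + sp p n = n := by
        rw [legendre]; omega
      have : (p - 1) * (∑ i, padicValNat p (Nat.factorial (j i))) =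
          (p - 1) * padicValNat p n.factorial := by omega
      have hV : (∑ i, padicValNat p (Nat.factorial (j i))) = padicValNat p n.factorial :=
        Nat.eq_of_mul_eq_mul_left (by omega) this
      omega
    calc padicValNat p n.factorial + l
        = padicValNat p (p ^ l * ∏ i, Nat.factorial (j i)) := hval.symm
      _ ≤ ((Finset.Nat.antidiagonalTuple (p ^ l) n).filter fun j => ∀ i, 1 ≤ j i).sup
            (fun j => padicValNat p (p ^ l * ∏ i, Nat.factorial (j i))) :=
          Finset.le_sup
            (f := fun j : Fin (p ^ l) → ℕ => padicValNat p (p ^ l * ∏ i, Nat.factorial (j i)))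
            hmem2
      _ ≤ _ := Finset.le_sup
          (f := fun k => ((Finset.Nat.antidiagonalTuple k n).filter fun j => ∀ i, 1 ≤ j i).sup
            fun j => padicValNat p (k * ∏ i, Nat.factorial (j i))) hmem1
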